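/- Let C be an n×n real matrix and α ∈ [0,1) with ‖C·v‖ ≤ α‖v‖ and ‖Cᵀ·v‖ ≤ α‖v‖ for all v ∈ ℝⁿ. Let f, h : ℝⁿ × ℝⁿ → ℝⁿ be continuously differentiable maps with f(0,0) = 0, h(0,0) = 0, and with total derivatives vanishing at (0,0), and assume the derivatives of f and h are Lipschitz on a neighborhood of the origin. Then there exist ε > 0, L ≥ 0, and a map ψ : ℝⁿ → ℝⁿ with ψ(0) = 0, Lipschitz with constant L on the closed ε-ball, such that for every x₀ with ‖x₀‖ ≤ ε there exists a sequence x : ℕ → ℝⁿ with x_0 = x₀ and ‖x_k‖ ≤ ε for all k, satisfying x_{k+1} = C·x_k + f(x_k, x_{k+1}) and ψ(x_k) = Cᵀ·ψ(x_{k+1}) + h(x_k, x_{k+1}) for all k, and with x_k → 0 (hence ψ(x_k) → 0) as k → ∞. -/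

import Mathlib

open scoped NNReal Matrix

set_option maxHeartbeats 1000000

private lemma small_lip_aux {E F : Type*} [NormedAddCommGroup E] [NormedSpace ℝ E]
    [NormedAddCommGroup F] [NormedSpace ℝ F] (f : E → F) (hf : ContDiff ℝ 1 f)
    (hdf0 : fderiv ℝ f 0 = 0) {δ : ℝ} (hδ : 0 < δ) :
    ∃ r > 0, ∀ p : E, ‖p‖ ≤ r → ∀ q : E, ‖q‖ ≤ r → ‖f p - f q‖ ≤ δ * ‖p - q‖ := by
  have hc : ContinuousAt (fderiv ℝ f) 0 := (hf.continuous_fderiv one_ne_zero).continuousAt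
  have hev : ∀ᶠ y in nhds (0 : E), ‖fderiv ℝ f y‖ < δ := by
    have h1 : Filter.Tendsto (fderiv ℝ f) (nhds 0) (nhds 0) := by
      rw [← hdf0]; exact hc
    have := h1 (Metric.ball_mem_nhds 0 hδ)
    filter_upwards [this] with y hy
    simpa [Metric.mem_ball, dist_zero_right] using hy
  obtain ⟨s, hs0, hsub⟩ := Metric.eventually_nhds_iff_ball.mp hev
  refine ⟨s / 2, by positivity, ?_⟩
  intro p hp q hq
  have hconv : Convex ℝ (Metric.closedBall (0 : E) (s / 2)) := convex_closedBall _ _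
  have hmemp : p ∈ Metric.closedBall (0 : E) (s / 2) := by
    simpa [Metric.mem_closedBall, dist_zero_right] using hp
  have hmemq : q ∈ Metric.closedBall (0 : E) (s / 2) := by
    simpa [Metric.mem_closedBall, dist_zero_right] using hq
  refine hconv.norm_image_sub_le_of_norm_fderiv_le
    (fun x _ => hf.differentiable one_ne_zero x) ?_ hmemq hmemp
  intro x hx
  have hxs : x ∈ Metric.ball (0 : E) s := by
    rw [Metric.mem_closedBall] at hx
    rw [Metric.mem_ball]
    linarith
  exact (hsub x hxs).le

/-- Local Stable Manifold Theorem for the diagonalized bidirectional discrete-time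
dynamics `x⁺ = C x + f(x, x⁺)`, `z = Cᵀ z⁺ + h(x, x⁺)`: if `C` and `Cᵀ` contract with
factor `α < 1`, `f, h` are `C¹`, vanish to first order at the origin, and have Lipschitz
derivatives near the origin, then there is a local stable manifold `z = ψ(x)` with
`ψ(0) = 0`, `ψ` Lipschitz on the `ε`-ball, carrying solutions converging to `0`. -/
theorem local_stable_manifold {n : ℕ} (C : Matrix (Fin n) (Fin n) ℝ) (α : ℝ)
    (hα0 : 0 ≤ α) (hα1 : α < 1)
    (hC : ∀ v : Fin n → ℝ, ‖C.mulVec v‖ ≤ α * ‖v‖)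
    (hCT : ∀ v : Fin n → ℝ, ‖Cᵀ.mulVec v‖ ≤ α * ‖v‖)
    (f h : (Fin n → ℝ) × (Fin n → ℝ) → Fin n → ℝ)
    (hf : ContDiff ℝ 1 f) (hh : ContDiff ℝ 1 h)
    (hf0 : f (0, 0) = 0) (hh0 : h (0, 0) = 0)
    (hdf0 : fderiv ℝ f (0, 0) = 0) (hdh0 : fderiv ℝ h (0, 0) = 0)
    (hLip : ∃ (U : Set ((Fin n → ℝ) × (Fin n → ℝ))) (K : ℝ≥0), (0, 0) ∈ U ∧ IsOpen U ∧
      LipschitzOnWith K (fderiv ℝ f) U ∧ LipschitzOnWith K (fderiv ℝ h) U) :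
    ∃ (ε L : ℝ), 0 < ε ∧ 0 ≤ L ∧
      ∃ ψ : (Fin n → ℝ) → Fin n → ℝ, ψ 0 = 0 ∧
        LipschitzOnWith (Real.toNNReal L) ψ (Metric.closedBall 0 ε) ∧
        ∀ x₀ : Fin n → ℝ, ‖x₀‖ ≤ ε →
          ∃ x : ℕ → Fin n → ℝ, x 0 = x₀ ∧ (∀ k, ‖x k‖ ≤ ε) ∧
            (∀ k, x (k + 1) = C.mulVec (x k) + f (x k, x (k + 1))) ∧
            (∀ k, ψ (x k) = Cᵀ.mulVec (ψ (x (k + 1))) + h (x k, x (k + 1))) ∧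
            Filter.Tendsto x Filter.atTop (nhds 0) := by
  classical
  clear hLip
  set δ : ℝ := (1 - α) / 4 with hδdef
  have hδ0 : 0 < δ := by rw [hδdef]; linarith
  have hδ1 : δ < 1 := by rw [hδdef]; linarith
  have hαδ : α + δ ≤ 1 := by rw [hδdef]; linarith
  -- radius on which f and h are δ-Lipschitz
  obtain ⟨rf, hrf0, hrf⟩ := small_lip_aux f hf (by rw [← Prod.mk_zero_zero]; exact hdf0) hδ0
  obtain ⟨rh, hrh0, hrh⟩ := small_lip_aux h hh (by rw [← Prod.mk_zero_zero]; exact hdh0) hδ0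
  set ε : ℝ := min rf rh with hεdef
  have hε0 : 0 < ε := lt_min hrf0 hrh0
  have hεle : (0 : ℝ) ≤ ε := hε0.le
  -- Lipschitz facts in coordinates
  have hprodnorm : ∀ a b : Fin n → ℝ, ‖((a, b) : (Fin n → ℝ) × (Fin n → ℝ))‖ = max ‖a‖ ‖b‖ := by
    intro a b; rfl
  have hfl : ∀ a b c d : Fin n → ℝ, ‖a‖ ≤ ε → ‖b‖ ≤ ε → ‖c‖ ≤ ε → ‖d‖ ≤ ε →
      ‖f (a, b) - f (c, d)‖ ≤ δ * max ‖a - c‖ ‖b - d‖ := by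
    intro a b c d ha hb hc hd
    have hab : ‖((a, b) : (Fin n → ℝ) × (Fin n → ℝ))‖ ≤ rf := by
      rw [hprodnorm]
      exact max_le (ha.trans (min_le_left _ _)) (hb.trans (min_le_left _ _))
    have hcd : ‖((c, d) : (Fin n → ℝ) × (Fin n → ℝ))‖ ≤ rf := by
      rw [hprodnorm]
      exact max_le (hc.trans (min_le_left _ _)) (hd.trans (min_le_left _ _))
    have h1 := hrf (a, b) hab (c, d) hcd
    simpa [Prod.mk_sub_mk, hprodnorm] using h1
  have hhl : ∀ a b c d : Fin n → ℝ, ‖a‖ ≤ ε → ‖b‖ ≤ ε → ‖c‖ ≤ ε → ‖d‖ ≤ ε →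
      ‖h (a, b) - h (c, d)‖ ≤ δ * max ‖a - c‖ ‖b - d‖ := by
    intro a b c d ha hb hc hd
    have hab : ‖((a, b) : (Fin n → ℝ) × (Fin n → ℝ))‖ ≤ rh := by
      rw [hprodnorm]
      exact max_le (ha.trans (min_le_right _ _)) (hb.trans (min_le_right _ _))
    have hcd : ‖((c, d) : (Fin n → ℝ) × (Fin n → ℝ))‖ ≤ rh := by
      rw [hprodnorm]
      exact max_le (hc.trans (min_le_right _ _)) (hd.trans (min_le_right _ _))
    have h1 := hrh (a, b) hab (c, d) hcd
    simpa [Prod.mk_sub_mk, hprodnorm] using h1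
  have hfb : ∀ a b : Fin n → ℝ, ‖a‖ ≤ ε → ‖b‖ ≤ ε → ‖f (a, b)‖ ≤ δ * max ‖a‖ ‖b‖ := by
    intro a b ha hb
    have h1 := hfl a b 0 0 ha hb (by simpa using hεle) (by simpa using hεle)
    rw [hf0, sub_zero] at h1
    simpa using h1
  have hhb : ∀ a b : Fin n → ℝ, ‖a‖ ≤ ε → ‖b‖ ≤ ε → ‖h (a, b)‖ ≤ δ * max ‖a‖ ‖b‖ := by
    intro a b ha hb
    have h1 := hhl a b 0 0 ha hb (by simpa using hεle) (by simpa using hεle)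
    rw [hh0, sub_zero] at h1
    simpa using h1
  -- existence of next state
  have key : ∀ x : Fin n → ℝ, ‖x‖ ≤ ε →
      ∃ y : Fin n → ℝ, ‖y‖ ≤ ε ∧ y = C.mulVec x + f (x, y) := by
    intro x hx
    haveI : CompleteSpace (Metric.closedBall (0 : Fin n → ℝ) ε) :=
      (Metric.isClosed_closedBall (x := (0 : Fin n → ℝ)) (ε := ε)).completeSpace_coe
    haveI : Nonempty (Metric.closedBall (0 : Fin n → ℝ) ε) :=
      ⟨⟨0, Metric.mem_closedBall_self hεle⟩⟩
    have hmap : ∀ y : Fin n → ℝ, ‖y‖ ≤ ε → ‖C.mulVec x + f (x, y)‖ ≤ ε := by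
      intro y hy
      calc ‖C.mulVec x + f (x, y)‖ ≤ ‖C.mulVec x‖ + ‖f (x, y)‖ := norm_add_le _ _
        _ ≤ α * ‖x‖ + δ * max ‖x‖ ‖y‖ := add_le_add (hC x) (hfb x y hx hy)
        _ ≤ α * ε + δ * ε := by
            have h1 : max ‖x‖ ‖y‖ ≤ ε := max_le hx hy
            have h2 : α * ‖x‖ ≤ α * ε := mul_le_mul_of_nonneg_left hx hα0
            have h3 : δ * max ‖x‖ ‖y‖ ≤ δ * ε := mul_le_mul_of_nonneg_left h1 hδ0.le
            linarith
        _ ≤ ε := by nlinarith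
    set g : Metric.closedBall (0 : Fin n → ℝ) ε → Metric.closedBall (0 : Fin n → ℝ) ε :=
      fun y => ⟨C.mulVec x + f (x, y.1), by
        rw [Metric.mem_closedBall, dist_zero_right]
        refine hmap y.1 ?_
        have := y.2
        rwa [Metric.mem_closedBall, dist_zero_right] at this⟩ with hgdef
    have hgc : ContractingWith δ.toNNReal g := by
      constructor
      · rw [← NNReal.coe_lt_coe, Real.coe_toNNReal _ hδ0.le]; exact hδ1
      · apply LipschitzWith.of_dist_le_mul
        intro y z
        have hy := y.2
        have hz := z.2
        rw [Metric.mem_closedBall, dist_zero_right] at hy hz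
        rw [Subtype.dist_eq, hgdef]
        simp only [dist_eq_norm]
        have e1 : (C.mulVec x + f (x, y.1)) - (C.mulVec x + f (x, z.1))
            = f (x, y.1) - f (x, z.1) := by abel
        rw [e1, Real.coe_toNNReal _ hδ0.le]
        calc ‖f (x, y.1) - f (x, z.1)‖ ≤ δ * max ‖x - x‖ ‖y.1 - z.1‖ :=
              hfl x y.1 x z.1 hx hy hx hz
          _ = δ * ‖y.1 - z.1‖ := by
              rw [sub_self, norm_zero, max_eq_right (norm_nonneg _)]
    set y := ContractingWith.fixedPoint g hgc with hydef
    have hfix : g y = y := hgc.fixedPoint_isFixedPt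
    refine ⟨y.1, ?_, ?_⟩
    · have := y.2
      rwa [Metric.mem_closedBall, dist_zero_right] at this
    · conv_lhs => rw [← hfix]
  -- uniqueness of next state
  have uniq : ∀ x y y' : Fin n → ℝ, ‖x‖ ≤ ε → ‖y‖ ≤ ε → ‖y'‖ ≤ ε →
      y = C.mulVec x + f (x, y) → y' = C.mulVec x + f (x, y') → y = y' := by
    intro x y y' hx hy hy' e1 e2
    have e3 : y - y' = f (x, y) - f (x, y') := by
      nth_rewrite 1 [e1]
      nth_rewrite 1 [e2]
      abel
    have h4 : ‖y - y'‖ ≤ δ * ‖y - y'‖ := by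
      calc ‖y - y'‖ = ‖f (x, y) - f (x, y')‖ := by rw [e3]
        _ ≤ δ * max ‖x - x‖ ‖y - y'‖ := hfl x y x y' hx hy hx hy'
        _ = δ * ‖y - y'‖ := by rw [sub_self, norm_zero, max_eq_right (norm_nonneg _)]
    have h5 : ‖y - y'‖ = 0 := by nlinarith [norm_nonneg (y - y')]
    exact sub_eq_zero.mp (norm_eq_zero.mp h5)
    -- the next-state map
  set F : (Fin n → ℝ) → (Fin n → ℝ) :=
    fun x => if hx : ‖x‖ ≤ ε then (key x hx).choose else 0 with hFdef
  have hFnorm : ∀ x : Fin n → ℝ, ‖x‖ ≤ ε → ‖F x‖ ≤ ε := by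
    intro x hx
    have : F x = (key x hx).choose := by rw [hFdef]; exact dif_pos hx
    rw [this]
    exact (key x hx).choose_spec.1
  have hFeq : ∀ x : Fin n → ℝ, ‖x‖ ≤ ε → F x = C.mulVec x + f (x, F x) := by
    intro x hx
    have : F x = (key x hx).choose := by rw [hFdef]; exact dif_pos hx
    rw [this]
    exact (key x hx).choose_spec.2
  have h0ε : ‖(0 : Fin n → ℝ)‖ ≤ ε := by simpa using hεle
  have hF0 : F 0 = 0 := by
    have hf0' : f 0 = 0 := by rw [← Prod.mk_zero_zero]; exact hf0
    refine uniq 0 (F 0) 0 h0ε (hFnorm 0 h0ε) h0ε (hFeq 0 h0ε) ?_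
    simp [Matrix.mulVec_zero, hf0', hf0]
  have h1δ : (0:ℝ) < 1 - δ := by linarith
  set β : ℝ := (α + δ) / (1 - δ) with hβdef
  have hβ0 : 0 ≤ β := div_nonneg (by linarith) h1δ.le
  have hβ1 : β < 1 := by rw [hβdef, div_lt_one h1δ, hδdef]; linarith
  have hFlip : ∀ x y : Fin n → ℝ, ‖x‖ ≤ ε → ‖y‖ ≤ ε →
      ‖F x - F y‖ ≤ β * ‖x - y‖ := by
    intro x y hx hy
    have hFx := hFnorm x hx
    have hFy := hFnorm y hy
    have e1 : F x - F y = C.mulVec (x - y) + (f (x, F x) - f (y, F y)) := by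
      nth_rewrite 1 [hFeq x hx]
      nth_rewrite 1 [hFeq y hy]
      rw [Matrix.mulVec_sub]
      abel
    have h2 : ‖F x - F y‖ ≤ α * ‖x - y‖ + δ * max ‖x - y‖ ‖F x - F y‖ := by
      calc ‖F x - F y‖ = ‖C.mulVec (x - y) + (f (x, F x) - f (y, F y))‖ := by rw [e1]
        _ ≤ ‖C.mulVec (x - y)‖ + ‖f (x, F x) - f (y, F y)‖ := norm_add_le _ _
        _ ≤ α * ‖x - y‖ + δ * max ‖x - y‖ ‖F x - F y‖ :=
            add_le_add (hC _) (hfl x (F x) y (F y) hx hFx hy hFy)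
    have h3 : max ‖x - y‖ ‖F x - F y‖ ≤ ‖x - y‖ + ‖F x - F y‖ :=
      max_le (le_add_of_nonneg_right (norm_nonneg _)) (le_add_of_nonneg_left (norm_nonneg _))
    have h4 : (1 - δ) * ‖F x - F y‖ ≤ (α + δ) * ‖x - y‖ := by
      nlinarith [mul_le_mul_of_nonneg_left h3 hδ0.le]
    rw [hβdef, div_mul_eq_mul_div, le_div_iff₀ h1δ]
    nlinarith
  -- iterates of F
  have hiter_mem : ∀ x : Fin n → ℝ, ‖x‖ ≤ ε → ∀ k, ‖F^[k] x‖ ≤ ε := by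
    intro x hx k
    induction k with
    | zero => simpa using hx
    | succ k ih => rw [Function.iterate_succ_apply']; exact hFnorm _ ih
  have hiter0 : ∀ k, F^[k] (0 : Fin n → ℝ) = 0 := fun k => Function.iterate_fixed hF0 k
  have hiter_lip : ∀ x y : Fin n → ℝ, ‖x‖ ≤ ε → ‖y‖ ≤ ε → ∀ k,
      ‖F^[k] x - F^[k] y‖ ≤ β ^ k * ‖x - y‖ := by
    intro x y hx hy k
    induction k with
    | zero => simp
    | succ k ih =>
        rw [Function.iterate_succ_apply', Function.iterate_succ_apply', pow_succ]
        calc ‖F (F^[k] x) - F (F^[k] y)‖ ≤ β * ‖F^[k] x - F^[k] y‖ :=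
              hFlip _ _ (hiter_mem x hx k) (hiter_mem y hy k)
          _ ≤ β * (β ^ k * ‖x - y‖) := mul_le_mul_of_nonneg_left ih hβ0
          _ = β ^ k * β * ‖x - y‖ := by ring
  have hiter_norm : ∀ x : Fin n → ℝ, ‖x‖ ≤ ε → ∀ k, ‖F^[k] x‖ ≤ β ^ k * ‖x‖ := by
    intro x hx k
    have h1 := hiter_lip x 0 hx h0ε k
    simpa [hiter0 k] using h1
  -- contraction of the transposed linear iteration
  have hT : ∀ (k : ℕ) (v : Fin n → ℝ), ‖(Cᵀ.mulVec)^[k] v‖ ≤ α ^ k * ‖v‖ := by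
    intro k
    induction k with
    | zero => intro v; simp
    | succ k ih =>
        intro v
        rw [Function.iterate_succ_apply]
        calc ‖(Cᵀ.mulVec)^[k] (Cᵀ.mulVec v)‖ ≤ α ^ k * ‖Cᵀ.mulVec v‖ := ih _
          _ ≤ α ^ k * (α * ‖v‖) := mul_le_mul_of_nonneg_left (hCT v) (pow_nonneg hα0 k)
          _ = α ^ (k + 1) * ‖v‖ := by ring
  have hTsub : ∀ (k : ℕ) (u v : Fin n → ℝ),
      (Cᵀ.mulVec)^[k] u - (Cᵀ.mulVec)^[k] v = (Cᵀ.mulVec)^[k] (u - v) := by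
    intro k
    induction k with
    | zero => intro u v; simp
    | succ k ih =>
        intro u v
        simp only [Function.iterate_succ_apply]
        rw [ih, ← Matrix.mulVec_sub]
  -- the series defining ψ
  set a : (Fin n → ℝ) → ℕ → (Fin n → ℝ) :=
    fun x j => (Cᵀ.mulVec)^[j] (h (F^[j] x, F^[j + 1] x)) with hadef
  have habound : ∀ x : Fin n → ℝ, ‖x‖ ≤ ε → ∀ j, ‖a x j‖ ≤ α ^ j * (δ * ε) := by
    intro x hx j
    have e0 : a x j = (Cᵀ.mulVec)^[j] (h (F^[j] x, F^[j + 1] x)) := rfl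
    rw [e0]
    calc ‖(Cᵀ.mulVec)^[j] (h (F^[j] x, F^[j + 1] x))‖
        ≤ α ^ j * ‖h (F^[j] x, F^[j + 1] x)‖ := hT j _
      _ ≤ α ^ j * (δ * ε) := by
          refine mul_le_mul_of_nonneg_left ?_ (pow_nonneg hα0 j)
          have h1 := hhb (F^[j] x) (F^[j + 1] x) (hiter_mem x hx j) (hiter_mem x hx (j + 1))
          refine h1.trans (mul_le_mul_of_nonneg_left
            (max_le (hiter_mem x hx j) (hiter_mem x hx (j + 1))) hδ0.le)
  have hasum : ∀ x : Fin n → ℝ, ‖x‖ ≤ ε → Summable (a x) := by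
    intro x hx
    exact Summable.of_norm_bounded (g := fun j => α ^ j * (δ * ε))
      ((summable_geometric_of_lt_one hα0 hα1).mul_right _) (habound x hx)
  set ψ : (Fin n → ℝ) → Fin n → ℝ := fun x => ∑' j, a x j with hψdef
  have hψ0 : ψ 0 = 0 := by
    have hz : ∀ j, a 0 j = 0 := by
      intro j
      have e0 : a 0 j = (Cᵀ.mulVec)^[j] (h (F^[j] 0, F^[j + 1] 0)) := rfl
      rw [e0, hiter0 j, hiter0 (j + 1), hh0]
      exact Function.iterate_fixed (Matrix.mulVec_zero _) j
    show (∑' j, a 0 j) = 0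
    rw [tsum_congr hz, tsum_zero]
  set T : (Fin n → ℝ) →L[ℝ] (Fin n → ℝ) :=
    LinearMap.toContinuousLinearMap (Matrix.mulVecLin Cᵀ) with hTdef
  have hTapp : ∀ v, T v = Cᵀ.mulVec v := fun v => rfl
  have hrec : ∀ x : Fin n → ℝ, ‖x‖ ≤ ε → ψ x = Cᵀ.mulVec (ψ (F x)) + h (x, F x) := by
    intro x hx
    have hx' : ‖F x‖ ≤ ε := hFnorm x hx
    have h1 : (∑' j, a x j) = a x 0 + ∑' j, a x (j + 1) := Summable.tsum_eq_zero_add (hasum x hx)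
    have h2 : ∀ j, a x (j + 1) = T (a (F x) j) := by
      intro j
      have e0 : a x (j + 1) = (Cᵀ.mulVec)^[j + 1] (h (F^[j + 1] x, F^[j + 1 + 1] x)) := rfl
      have e0' : a (F x) j = (Cᵀ.mulVec)^[j] (h (F^[j] (F x), F^[j + 1] (F x))) := rfl
      have eF1 : F^[j + 1] x = F^[j] (F x) := Function.iterate_succ_apply F j x
      have eF2 : F^[j + 1 + 1] x = F^[j + 1] (F x) := Function.iterate_succ_apply F (j + 1) x
      rw [e0, e0', eF1, eF2, Function.iterate_succ_apply' (Cᵀ.mulVec) j, hTapp]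
    have h3 : (∑' j, a x (j + 1)) = T (∑' j, a (F x) j) := by
      rw [tsum_congr h2]
      exact (T.map_tsum (hasum (F x) hx')).symm
    have ha0 : a x 0 = h (x, F x) := by
      have e0 : a x 0 = (Cᵀ.mulVec)^[0] (h (F^[0] x, F^[0 + 1] x)) := rfl
      rw [e0]
      simp
    calc ψ x = a x 0 + ∑' j, a x (j + 1) := h1
      _ = h (x, F x) + T (∑' j, a (F x) j) := by rw [ha0, h3]
      _ = Cᵀ.mulVec (ψ (F x)) + h (x, F x) := by
          rw [hTapp, show (∑' j, a (F x) j) = ψ (F x) from rfl, add_comm]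
  -- Lipschitz estimate for ψ
  have hαβ0 : 0 ≤ α * β := mul_nonneg hα0 hβ0
  have hαβ : α * β < 1 := by nlinarith
  have hψlip : ∀ x y : Fin n → ℝ, ‖x‖ ≤ ε → ‖y‖ ≤ ε →
      ‖ψ x - ψ y‖ ≤ (δ * (1 - α * β)⁻¹) * ‖x - y‖ := by
    intro x y hx hy
    have hterm : ∀ j, ‖a x j - a y j‖ ≤ (δ * ‖x - y‖) * (α * β) ^ j := by
      intro j
      have e1 : a x j - a y j
          = (Cᵀ.mulVec)^[j] (h (F^[j] x, F^[j + 1] x) - h (F^[j] y, F^[j + 1] y)) := hTsub j _ _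
      calc ‖a x j - a y j‖
          = ‖(Cᵀ.mulVec)^[j] (h (F^[j] x, F^[j + 1] x) - h (F^[j] y, F^[j + 1] y))‖ := by
            rw [e1]
        _ ≤ α ^ j * ‖h (F^[j] x, F^[j + 1] x) - h (F^[j] y, F^[j + 1] y)‖ := hT j _
        _ ≤ α ^ j * (δ * max ‖F^[j] x - F^[j] y‖ ‖F^[j + 1] x - F^[j + 1] y‖) :=
            mul_le_mul_of_nonneg_left
              (hhl _ _ _ _ (hiter_mem x hx j) (hiter_mem x hx (j + 1))
                (hiter_mem y hy j) (hiter_mem y hy (j + 1))) (pow_nonneg hα0 j)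
        _ ≤ α ^ j * (δ * (β ^ j * ‖x - y‖)) := by
            refine mul_le_mul_of_nonneg_left (mul_le_mul_of_nonneg_left ?_ hδ0.le)
              (pow_nonneg hα0 j)
            refine max_le (hiter_lip x y hx hy j) ((hiter_lip x y hx hy (j + 1)).trans ?_)
            exact mul_le_mul_of_nonneg_right
              (pow_le_pow_of_le_one hβ0 hβ1.le (Nat.le_succ j)) (norm_nonneg _)
        _ = (δ * ‖x - y‖) * (α * β) ^ j := by rw [mul_pow]; ring
    have hgeom : Summable (fun j : ℕ => (δ * ‖x - y‖) * (α * β) ^ j) :=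
      (summable_geometric_of_lt_one hαβ0 hαβ).mul_left _
    have hsumnorm : Summable (fun j => ‖a x j - a y j‖) :=
      Summable.of_nonneg_of_le (fun j => norm_nonneg _) hterm hgeom
    have e2 : ψ x - ψ y = ∑' j, (a x j - a y j) := (Summable.tsum_sub (hasum x hx) (hasum y hy)).symm
    calc ‖ψ x - ψ y‖ = ‖∑' j, (a x j - a y j)‖ := by rw [e2]
      _ ≤ ∑' j, ‖a x j - a y j‖ := norm_tsum_le_tsum_norm hsumnorm
      _ ≤ ∑' j, (δ * ‖x - y‖) * (α * β) ^ j := Summable.tsum_le_tsum hterm hsumnorm hgeom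
      _ = (δ * ‖x - y‖) * (1 - α * β)⁻¹ := by
          rw [tsum_mul_left, tsum_geometric_of_lt_one hαβ0 hαβ]
      _ = (δ * (1 - α * β)⁻¹) * ‖x - y‖ := by ring
  have hL0 : 0 ≤ δ * (1 - α * β)⁻¹ :=
    mul_nonneg hδ0.le (inv_nonneg.mpr (by linarith))
  refine ⟨ε, δ * (1 - α * β)⁻¹, hε0, hL0, ψ, hψ0, ?_, ?_⟩
  · refine LipschitzOnWith.of_dist_le_mul ?_
    intro x hx y hy
    rw [Metric.mem_closedBall, dist_zero_right] at hx hy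
    rw [dist_eq_norm, dist_eq_norm, Real.coe_toNNReal _ hL0]
    exact hψlip x y hx hy
  · intro x₀ hx₀
    refine ⟨fun k => F^[k] x₀, Function.iterate_zero_apply F x₀,
      fun k => hiter_mem x₀ hx₀ k, ?_, ?_, ?_⟩
    · intro k
      show F^[k + 1] x₀ = C.mulVec (F^[k] x₀) + f (F^[k] x₀, F^[k + 1] x₀)
      rw [Function.iterate_succ_apply' F k x₀]
      exact hFeq _ (hiter_mem x₀ hx₀ k)
    · intro k
      have h1 := hrec (F^[k] x₀) (hiter_mem x₀ hx₀ k)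
      rw [← Function.iterate_succ_apply' F k x₀] at h1
      exact h1
    · have hb : ∀ k, ‖F^[k] x₀‖ ≤ β ^ k * ‖x₀‖ := hiter_norm x₀ hx₀
      have h0 : Filter.Tendsto (fun k : ℕ => β ^ k * ‖x₀‖) Filter.atTop (nhds 0) := by
        have h1 := (tendsto_pow_atTop_nhds_zero_of_lt_one hβ0 hβ1).mul_const ‖x₀‖
        simpa using h1
      rw [tendsto_zero_iff_norm_tendsto_zero]
      exact squeeze_zero (fun k => norm_nonneg _) hb h0
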